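/- With G = L F_X², B = h'F_X + k'F, h' = -L_X F_X - L F_XX, k' = F_X + (L_X F_XX)/2, at any point P with F(P) = 0, F_X(P) = 0, F_Y(P) ≠ 0, one has B_X(P) = -L(P)F_XX(P)² = -G_XX(P)/2 - F_XX(P)G_Y(P)/(2F_Y(P)). -/

import Mathlib

open MvPolynomial

noncomputable section

abbrev P2 : Type := MvPolynomial (Fin 2) ℂ

noncomputable def dX (f : P2) : P2 := pderiv 0 f
noncomputable def dY (f : P2) : P2 := pderiv 1 f

noncomputable def hpol (L F : P2) : P2 :=
  C ((1:ℂ)/2) * dX L * (dX F + dY F) + L * dY (dX F)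

noncomputable def kpol (L F : P2) : P2 :=
  - dX F - C ((1:ℂ)/2) * dX L * dY (dX F)

noncomputable def hpol' (L F : P2) : P2 :=
  - dX L * dX F - L * dX (dX F)

noncomputable def kpol' (L F : P2) : P2 :=
  dX F + C ((1:ℂ)/2) * dX L * dX (dX F)

noncomputable def Apol (L F : P2) : P2 := hpol L F * dX F + kpol L F * F

noncomputable def Bpol (L F : P2) : P2 := hpol' L F * dX F + kpol' L F * F

noncomputable def Gpol (L F : P2) : P2 := L * (dX F) ^ 2

/-- Condition 5 at the points P₅,…,P₁₆ :
B_X(P) = -L(P)F_XX(P)² = -G_XX(P)/2 - F_XX(P)G_Y(P)/(2F_Y(P)). -/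
theorem condition5_at_FX_zeros (F L : P2)
    (P : Fin 2 → ℂ) (hFP : eval P F = 0) (hFXP : eval P (dX F) = 0)
    (hFY : eval P (dY F) ≠ 0) :
    eval P (dX (Bpol L F)) = -(eval P L) * (eval P (dX (dX F))) ^ 2 ∧
    -(eval P L) * (eval P (dX (dX F))) ^ 2
      = -(eval P (dX (dX (Gpol L F)))) / 2
          - eval P (dX (dX F)) * eval P (dY (Gpol L F)) / (2 * eval P (dY F)) := by
  have hX : eval P (pderiv 0 F) = 0 := hFXP
  have h2 : ((2:ℕ) : P2) = C 2 := (map_natCast C 2).symm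
  simp only [Bpol, Gpol, hpol', kpol', dX, dY, map_add, map_mul, map_neg, map_sub, pderiv_mul,
    pderiv_pow, h2, pderiv_C, map_pow, eval_add, eval_mul, eval_neg, eval_sub, eval_pow, eval_C,
    hFP, hX]
  constructor
  · ring
  · field_simp
    rw [show ((2 - 1 : ℕ) : P2) = 1 by norm_num, map_one]
    ring
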